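/- arXiv:1801.07897 — 2 statements merged into one kernel-verified Lean document; each statement's English description precedes it below -/
import Mathlib

section
/- For every 0 ≤ s ≤ t ≤ T, the map x ↦ X_{s,t}(x) is differentiable, and its derivative is given by ∂_x X_{s,t}(x) = exp( ∫_s^t ∂_x b(u, X_{s,u}(x)) du ); in particular this derivative is strictly positive. -/
open Set intervalIntegral MeasureTheory

lemma ftc_cont {k : ℝ → ℝ} (hk : Continuous k) (s u : ℝ) :
    HasDerivAt (fun w => ∫ v in s..w, k v) (k u) u :=
  intervalIntegral.integral_hasDerivAt_right (hk.intervalIntegrable _ _)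
    (hk.stronglyMeasurableAtFilter _ _) hk.continuousAt

lemma exp_sub_one_le_mul {x : ℝ} (hx : 0 ≤ x) : Real.exp x - 1 ≤ x * Real.exp x := by
  have h := Real.add_one_le_exp (-x)
  nlinarith [Real.exp_pos x, Real.exp_neg x, mul_pos (Real.exp_pos x) (Real.exp_pos (-x)),
    Real.exp_neg x ▸ mul_inv_cancel₀ (ne_of_gt (Real.exp_pos x))]

lemma gronwall_aux {K e τ T : ℝ} (hK : 0 ≤ K) (he : 0 ≤ e) (hτ : 0 ≤ τ) (hτT : τ ≤ T) :
    gronwallBound 0 K e τ ≤ e * (T * Real.exp (K * T)) := by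
  have hT0 : 0 ≤ T := hτ.trans hτT
  have hexp1 : (1 : ℝ) ≤ Real.exp (K * T) := Real.one_le_exp (by positivity)
  rcases eq_or_ne K 0 with hK0 | hK0
  · rw [hK0, gronwallBound_K0]
    simp only [hK0, zero_mul, Real.exp_zero, mul_one] at hexp1 ⊢
    nlinarith
  · have hKpos : 0 < K := lt_of_le_of_ne hK (Ne.symm hK0)
    rw [gronwallBound_of_K_ne_0 hK0]
    have h1 : Real.exp (K * τ) - 1 ≤ (K * τ) * Real.exp (K * τ) :=
      exp_sub_one_le_mul (by positivity)
    have h2 : Real.exp (K * τ) ≤ Real.exp (K * T) :=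
      Real.exp_le_exp.2 (by nlinarith)
    have h3 : e / K * (Real.exp (K * τ) - 1) ≤ e / K * ((K * τ) * Real.exp (K * τ)) := by
      apply mul_le_mul_of_nonneg_left h1 (by positivity)
    have h4 : e / K * ((K * τ) * Real.exp (K * τ)) = e * (τ * Real.exp (K * τ)) := by
      field_simp
    have h5 : e * (τ * Real.exp (K * τ)) ≤ e * (T * Real.exp (K * T)) := by
      apply mul_le_mul_of_nonneg_left _ he
      have := Real.exp_pos (K * τ)
      nlinarith
    simp only [zero_mul, zero_add]
    linarith

/-- For 0 ≤ s ≤ t ≤ T, the forward flow x ↦ X_{s,t}(x) is differentiable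
with derivative ∂_x X_{s,t}(x) = exp(∫_s^t ∂_x b(u, X_{s,u}(x)) du) > 0. -/
theorem transport_flow_hasDerivAt (T L : ℝ) (hT : 0 < T)
    (b b' : ℝ → ℝ → ℝ)
    (hb : ContinuousOn (fun p : ℝ × ℝ => b p.1 p.2) (Set.Icc 0 T ×ˢ Set.univ))
    (hderiv : ∀ t ∈ Set.Icc (0 : ℝ) T, ∀ x : ℝ, HasDerivAt (fun y => b t y) (b' t x) x)
    (hb'c : ContinuousOn (fun p : ℝ × ℝ => b' p.1 p.2) (Set.Icc 0 T ×ˢ Set.univ))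
    (hb'bdd : ∀ t ∈ Set.Icc (0 : ℝ) T, ∀ x : ℝ, |b' t x| ≤ L)
    (z : ℝ → ℝ) (hz : ContinuousOn z (Set.Icc 0 T))
    (X : ℝ → ℝ → ℝ → ℝ)
    (hXcont : ∀ s ∈ Set.Icc (0 : ℝ) T, ∀ x : ℝ,
      ContinuousOn (fun t => X s t x) (Set.Icc s T))
    (hXeq : ∀ s ∈ Set.Icc (0 : ℝ) T, ∀ x : ℝ, ∀ t ∈ Set.Icc s T,
      X s t x = x + (∫ u in s..t, b u (X s u x)) + z t - z s) :
    ∀ s t : ℝ, 0 ≤ s → s ≤ t → t ≤ T → ∀ x : ℝ,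
      HasDerivAt (fun y => X s t y) (Real.exp (∫ u in s..t, b' u (X s u x))) x ∧
      0 < Real.exp (∫ u in s..t, b' u (X s u x)) := by
  intro s t hs0 hst htT x
  refine ⟨?_, Real.exp_pos _⟩
  have hsT : s ≤ T := hst.trans htT
  have hsmem : s ∈ Icc (0:ℝ) T := ⟨hs0, hsT⟩
  have htmem : t ∈ Icc s T := ⟨hst, htT⟩
  have hL0 : 0 ≤ L := le_trans (abs_nonneg _) (hb'bdd 0 ⟨le_refl 0, hT.le⟩ 0)
  have hIccsub : Icc s T ⊆ Icc (0:ℝ) T := Icc_subset_Icc hs0 le_rfl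
  -- the clamping map
  set p : ℝ → ℝ := fun v => max s (min v T) with hp_def
  have hp_mem : ∀ v, p v ∈ Icc s T := fun v =>
    ⟨le_max_left _ _, max_le hsT (min_le_right _ _)⟩
  have hp_eq : ∀ v ∈ Icc s T, p v = v := fun v hv => by
    simp only [hp_def]; rw [min_eq_left hv.2, max_eq_right hv.1]
  have hp_cont : Continuous p := continuous_const.max (continuous_id.min continuous_const)
  -- continuity of the clamped flow
  have hXc : ∀ y : ℝ, Continuous fun v => X s (p v) y := by
    intro y
    rw [← continuousOn_univ]
    exact (hXcont s hsmem y).comp hp_cont.continuousOn (fun v _ => hp_mem v)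
  -- clamped drift along the flow
  set H : ℝ → ℝ → ℝ := fun y v => b (p v) (X s (p v) y) with hH_def
  have hHc : ∀ y : ℝ, Continuous (H y) := by
    intro y
    rw [← continuousOn_univ]
    exact hb.comp (hp_cont.prodMk (hXc y)).continuousOn
      (fun v _ => ⟨hIccsub (hp_mem v), mem_univ _⟩)
  set G : ℝ → ℝ := fun v => b' (p v) (X s (p v) x) with hG_def
  have hGc : Continuous G := by
    rw [← continuousOn_univ]
    exact hb'c.comp (hp_cont.prodMk (hXc x)).continuousOn
      (fun v _ => ⟨hIccsub (hp_mem v), mem_univ _⟩)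
  -- integral congruence and integral equation with clamped integrand
  have hX' : ∀ y : ℝ, ∀ u ∈ Icc s T, X s u y = y + (∫ v in s..u, H y v) + z u - z s := by
    intro y u hu
    rw [hXeq s hsmem y u hu]
    have : (∫ v in s..u, b v (X s v y)) = ∫ v in s..u, H y v := by
      apply intervalIntegral.integral_congr
      intro v hv
      rw [uIcc_of_le hu.1] at hv
      have hv' : v ∈ Icc s T := ⟨hv.1, hv.2.trans hu.2⟩
      simp only [hH_def, hp_eq v hv']
    rw [this]
  -- the difference function
  set F : ℝ → ℝ → ℝ := fun y u => (y - x) + ∫ v in s..u, (H y v - H x v) with hF_def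
  have hF_eq : ∀ y : ℝ, ∀ u ∈ Icc s T, F y u = X s u y - X s u x := by
    intro y u hu
    rw [hX' y u hu, hX' x u hu, hF_def]
    simp only
    rw [intervalIntegral.integral_sub ((hHc y).intervalIntegrable _ _)
      ((hHc x).intervalIntegrable _ _)]
    ring
  have hF_deriv : ∀ y u : ℝ, HasDerivAt (F y) (H y u - H x u) u := by
    intro y u
    exact (ftc_cont ((hHc y).sub (hHc x)) s u).const_add _
  have hF_s : ∀ y : ℝ, F y s = y - x := by
    intro y; simp [hF_def]
  -- Lipschitz property of b in space
  have hLip : ∀ u ∈ Icc (0:ℝ) T, ∀ a c : ℝ, |b u a - b u c| ≤ L * |a - c| := by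
    intro u hu a c
    have := Convex.norm_image_sub_le_of_norm_hasDerivWithin_le
      (f := fun y => b u y) (f' := fun y => b' u y) (s := univ) (C := L)
      (fun w _ => (hderiv u hu w).hasDerivWithinAt)
      (fun w _ => by rw [Real.norm_eq_abs]; exact hb'bdd u hu w)
      convex_univ (mem_univ c) (mem_univ a)
    simpa [Real.norm_eq_abs] using this
  -- Gronwall 1 : closeness of trajectories
  have hgron1 : ∀ y : ℝ, ∀ u ∈ Icc s t, |X s u y - X s u x| ≤ |y - x| * Real.exp (L * T) := by
    intro y u hu
    have key : ∀ w ∈ Icc s t, ‖F y w‖ ≤ gronwallBound (|y - x|) L 0 (w - s) := by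
      apply norm_le_gronwallBound_of_norm_deriv_right_le
        (f' := fun w => H y w - H x w)
      · exact fun w _ => (hF_deriv y w).differentiableAt.continuousAt.continuousWithinAt
      · exact fun w _ => (hF_deriv y w).hasDerivWithinAt
      · rw [hF_s, Real.norm_eq_abs]
      · intro w hw
        have hwT : w ∈ Icc s T := ⟨hw.1, hw.2.le.trans htT⟩
        have hpw : p w = w := hp_eq w hwT
        have h1 : H y w - H x w = b w (X s w y) - b w (X s w x) := by
          simp only [hH_def, hpw]
        rw [Real.norm_eq_abs, Real.norm_eq_abs, h1, hF_eq y w hwT, add_zero]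
        exact hLip w (hIccsub hwT) _ _
    have h2 := key u hu
    rw [gronwallBound_ε0, Real.norm_eq_abs, hF_eq y u ⟨hu.1, hu.2.trans htT⟩] at h2
    refine h2.trans ?_
    apply mul_le_mul_of_nonneg_left _ (abs_nonneg _)
    exact Real.exp_le_exp.2 (by nlinarith [hu.1, hu.2.trans htT, hs0])
  -- the exponential factor
  set E : ℝ → ℝ := fun u => Real.exp (∫ v in s..u, G v) with hE_def
  have hE_deriv : ∀ u : ℝ, HasDerivAt E (G u * E u) u := by
    intro u
    have := (ftc_cont hGc s u).exp
    simpa [hE_def, mul_comm] using this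
  have hE_s : E s = 1 := by simp [hE_def]
  -- the target equals E t
  have htarget : (∫ u in s..t, b' u (X s u x)) = ∫ v in s..t, G v := by
    apply intervalIntegral.integral_congr
    intro v hv
    rw [uIcc_of_le hst] at hv
    have hv' : v ∈ Icc s T := ⟨hv.1, hv.2.trans htT⟩
    simp only [hG_def, hp_eq v hv']
  -- bound on the reference trajectory
  obtain ⟨C, hC⟩ := IsCompact.exists_bound_of_continuousOn isCompact_Icc (hXcont s hsmem x)
  have hC0 : 0 ≤ C := le_trans (norm_nonneg _) (hC s ⟨le_rfl, hsT⟩)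
  -- uniform continuity of b' on a compact set
  have hK2 : IsCompact (Icc (0:ℝ) T ×ˢ Icc (-(C+1)) (C+1)) := isCompact_Icc.prod isCompact_Icc
  have hUC : UniformContinuousOn (fun p : ℝ × ℝ => b' p.1 p.2)
      (Icc (0:ℝ) T ×ˢ Icc (-(C+1)) (C+1)) :=
    hK2.uniformContinuousOn_of_continuous
      (hb'c.mono (prod_mono_right (subset_univ _)))
  -- now the main epsilon-delta argument
  rw [hasDerivAt_iff_isLittleO, Asymptotics.isLittleO_iff]
  intro c hc
  set D : ℝ := T * Real.exp (L * T) * Real.exp (L * T) + 1 with hD_def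
  have hD0 : 0 < D := by positivity
  set ε : ℝ := c / D with hε_def
  have hε0 : 0 < ε := div_pos hc hD0
  obtain ⟨ρ, hρ0, hρ⟩ := Metric.uniformContinuousOn_iff.1 hUC ε hε0
  set δy : ℝ := min ρ 1 * Real.exp (-(L * T)) with hδy_def
  have hδy0 : 0 < δy := by positivity
  have hball : ∀ᶠ y in nhds x, |y - x| < δy := by
    have := Metric.ball_mem_nhds x hδy0
    filter_upwards [this] with y hy
    rw [Metric.mem_ball, Real.dist_eq] at hy
    exact hy
  filter_upwards [hball] with y hyx
  -- key smallness: trajectories stay within min ρ 1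
  have hsmall : |y - x| * Real.exp (L * T) < min ρ 1 := by
    have h1 : |y - x| * Real.exp (L * T) < δy * Real.exp (L * T) :=
      mul_lt_mul_of_pos_right hyx (Real.exp_pos _)
    rw [hδy_def] at h1
    rw [mul_assoc, ← Real.exp_add] at h1
    simpa using h1
  -- the defect function
  set g : ℝ → ℝ := fun u => F y u - (y - x) * E u with hg_def
  have hg_s : g s = 0 := by simp [hg_def, hF_s, hE_s]
  have hg_deriv : ∀ u : ℝ, HasDerivAt g ((H y u - H x u) - (y - x) * (G u * E u)) u :=
    fun u => (hF_deriv y u).sub ((hE_deriv u).const_mul _)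
  -- Gronwall 2
  have key2 : ∀ w ∈ Icc s t, ‖g w‖ ≤
      gronwallBound 0 L (ε * (|y - x| * Real.exp (L * T))) (w - s) := by
    apply norm_le_gronwallBound_of_norm_deriv_right_le
      (f' := fun u => (H y u - H x u) - (y - x) * (G u * E u))
    · exact fun w _ => (hg_deriv w).differentiableAt.continuousAt.continuousWithinAt
    · exact fun w _ => (hg_deriv w).hasDerivWithinAt
    · rw [hg_s, norm_zero]
    · intro w hw
      have hwt : w ∈ Icc s t := ⟨hw.1, hw.2.le⟩
      have hwT : w ∈ Icc s T := ⟨hw.1, hw.2.le.trans htT⟩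
      have hw0T : w ∈ Icc (0:ℝ) T := hIccsub hwT
      have hpw : p w = w := hp_eq w hwT
      set φ : ℝ := X s w x with hφ_def
      set ψ : ℝ := X s w y with hψ_def
      have hψφ : |ψ - φ| ≤ |y - x| * Real.exp (L * T) := hgron1 y w hwt
      have hψφρ : |ψ - φ| < ρ := lt_of_le_of_lt hψφ (lt_of_lt_of_le hsmall (min_le_left _ _))
      have hψφ1 : |ψ - φ| < 1 := lt_of_le_of_lt hψφ (lt_of_lt_of_le hsmall (min_le_right _ _))
      have hφC : |φ| ≤ C := by
        simpa [Real.norm_eq_abs] using hC w hwT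
      have hψC : |ψ| ≤ C + 1 := by
        have h := abs_sub_abs_le_abs_sub ψ φ
        linarith [hψφ1.le]
      set I : Set ℝ := Icc (min φ ψ) (max φ ψ) with hI_def
      have hmem_bounds : ∀ a ∈ I, |a - φ| ≤ |ψ - φ| ∧ |a| ≤ C + 1 := by
        intro a ha
        obtain ⟨ha1, ha2⟩ := ha
        have hφ' := abs_le.1 (hφC.trans (by linarith : C ≤ C + 1))
        have hψ' := abs_le.1 hψC
        constructor
        · rcases le_total φ ψ with h | h
          · rw [min_eq_left h] at ha1; rw [max_eq_right h] at ha2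
            rw [abs_of_nonneg (by linarith), abs_of_nonneg (by linarith)]; linarith
          · rw [min_eq_right h] at ha1; rw [max_eq_left h] at ha2
            rw [abs_of_nonpos (by linarith), abs_of_nonpos (by linarith)]; linarith
        · rw [abs_le]
          refine ⟨le_trans (le_min hφ'.1 hψ'.1) ha1, ha2.trans (max_le hφ'.2 hψ'.2)⟩
      have hb'close : ∀ a ∈ I, |b' w a - b' w φ| ≤ ε := by
        intro a ha
        obtain ⟨h1, h2⟩ := hmem_bounds a ha
        have hφ' := abs_le.1 (hφC.trans (by linarith : C ≤ C + 1))
        have hmemK : ((w, a) : ℝ × ℝ) ∈ Icc (0:ℝ) T ×ˢ Icc (-(C+1)) (C+1) :=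
          ⟨hw0T, abs_le.1 h2⟩
        have hmemK' : ((w, φ) : ℝ × ℝ) ∈ Icc (0:ℝ) T ×ˢ Icc (-(C+1)) (C+1) :=
          ⟨hw0T, hφ'⟩
        have hd : dist ((w, a) : ℝ × ℝ) ((w, φ) : ℝ × ℝ) < ρ := by
          rw [Prod.dist_eq, Real.dist_eq, Real.dist_eq, sub_self, abs_zero,
            max_eq_right (abs_nonneg _)]
          exact lt_of_le_of_lt h1 hψφρ
        have := hρ ((w, a) : ℝ × ℝ) hmemK ((w, φ) : ℝ × ℝ) hmemK' hd
        rw [Real.dist_eq] at this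
        exact this.le
      have hφI : φ ∈ I := ⟨min_le_left _ _, le_max_left _ _⟩
      have hψI : ψ ∈ I := ⟨min_le_right _ _, le_max_right _ _⟩
      have hlin : ∀ a : ℝ, HasDerivAt (fun a => b' w φ * a) (b' w φ) a := fun a => by
        simpa using (hasDerivAt_id a).const_mul (b' w φ)
      have hR : |b w ψ - b w φ - b' w φ * (ψ - φ)| ≤ ε * |ψ - φ| := by
        have hmvt := Convex.norm_image_sub_le_of_norm_hasDerivWithin_le
          (f := fun a => b w a - b' w φ * a) (f' := fun a => b' w a - b' w φ)
          (s := I) (C := ε)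
          (fun a _ => ((hderiv w hw0T a).sub (hlin a)).hasDerivWithinAt)
          (fun a ha => by rw [Real.norm_eq_abs]; exact hb'close a ha)
          (convex_Icc _ _) hφI hψI
        rw [Real.norm_eq_abs, Real.norm_eq_abs] at hmvt
        calc |b w ψ - b w φ - b' w φ * (ψ - φ)|
            = |(b w ψ - b' w φ * ψ) - (b w φ - b' w φ * φ)| := by ring_nf
          _ ≤ ε * |ψ - φ| := hmvt
      have hgw : g w = (ψ - φ) - (y - x) * E w := by
        rw [hg_def]; simp only; rw [hF_eq y w hwT]
      have hid : (H y w - H x w) - (y - x) * (G w * E w)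
          = b' w φ * g w + (b w ψ - b w φ - b' w φ * (ψ - φ)) := by
        rw [hgw]
        simp only [hH_def, hG_def, hpw, hφ_def, hψ_def]
        ring
      rw [Real.norm_eq_abs, Real.norm_eq_abs, hid]
      calc |b' w φ * g w + (b w ψ - b w φ - b' w φ * (ψ - φ))|
          ≤ |b' w φ * g w| + |b w ψ - b w φ - b' w φ * (ψ - φ)| := abs_add_le _ _
        _ = |b' w φ| * |g w| + |b w ψ - b w φ - b' w φ * (ψ - φ)| := by rw [abs_mul]
        _ ≤ L * |g w| + ε * (|y - x| * Real.exp (L * T)) := by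
            refine add_le_add (mul_le_mul_of_nonneg_right (hb'bdd w hw0T φ) (abs_nonneg _)) ?_
            exact hR.trans (mul_le_mul_of_nonneg_left hψφ hε0.le)
  -- conclude
  have h6 := key2 t ⟨hst, le_rfl⟩
  have h7 : gronwallBound 0 L (ε * (|y - x| * Real.exp (L * T))) (t - s) ≤
      ε * (|y - x| * Real.exp (L * T)) * (T * Real.exp (L * T)) :=
    gronwall_aux hL0 (by positivity) (by linarith) (by linarith)
  have hgt : g t = X s t y - X s t x - (y - x) * E t := by
    rw [hg_def]; simp only; rw [hF_eq y t ⟨hst, htT⟩]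
  rw [hgt] at h6
  have hEt : Real.exp (∫ u in s..t, b' u (X s u x)) = E t := by rw [htarget]
  rw [hEt, smul_eq_mul, Real.norm_eq_abs, Real.norm_eq_abs]
  have h8 : T * Real.exp (L * T) * Real.exp (L * T) ≤ D := by
    rw [hD_def]; linarith
  have h9 : ε * (T * Real.exp (L * T) * Real.exp (L * T)) ≤ ε * D :=
    mul_le_mul_of_nonneg_left h8 hε0.le
  have h10 : ε * D = c := by
    rw [hε_def]; field_simp
  rw [Real.norm_eq_abs] at h6
  calc |X s t y - X s t x - (y - x) * E t|
      ≤ ε * (|y - x| * Real.exp (L * T)) * (T * Real.exp (L * T)) := h6.trans h7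
    _ = (ε * (T * Real.exp (L * T) * Real.exp (L * T))) * |y - x| := by ring
    _ ≤ (ε * D) * |y - x| := mul_le_mul_of_nonneg_right h9 (abs_nonneg _)
    _ = c * |y - x| := by rw [h10]
end

section
/- Let T > 0, let b : [0,T] × ℝ → ℝ be continuous with continuous bounded spatial derivative ∂_x b, let z : [0,T] → ℝ be continuously differentiable, and let u₀ : ℝ → ℝ be continuously differentiable. For t ∈ [0,T] let Y_{0,t} := (X_{0,t})^{−1} be the inverse of the forward flow, and define u(t,x) := u₀(Y_{0,t}(x)). Then u is differentiable in t and x on [0,T] × ℝ and satisfies the transport equation ∂_t u(t,x) + ( b(t,x) + z'(t) ) ∂_x u(t,x) = 0 with initial condition u(0,x) = u₀(x) for all x ∈ ℝ. -/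
open Set intervalIntegral MeasureTheory Filter Topology

private lemma ftc_Icc {T : ℝ} (hT : 0 ≤ T) {f : ℝ → ℝ} (hf : ContinuousOn f (Set.Icc 0 T))
    {t : ℝ} (ht : t ∈ Set.Icc 0 T) :
    HasDerivWithinAt (fun τ => ∫ u in (0:ℝ)..τ, f u) (f t) (Set.Icc 0 T) t := by
  set F : ℝ → ℝ := Set.IccExtend hT ((Set.Icc (0:ℝ) T).restrict f) with hF
  have hFc : Continuous F := (continuousOn_iff_continuous_restrict.mp hf).Icc_extend'
  have hFf : ∀ u ∈ Set.Icc 0 T, F u = f u := fun u hu => Set.IccExtend_of_mem hT _ hu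
  have key : ∀ τ ∈ Set.Icc (0:ℝ) T, (∫ u in (0:ℝ)..τ, F u) = ∫ u in (0:ℝ)..τ, f u := by
    intro τ hτ
    refine intervalIntegral.integral_congr fun u hu => ?_
    rw [Set.uIcc_of_le hτ.1] at hu
    exact hFf u ⟨hu.1, le_trans hu.2 hτ.2⟩
  have hd : HasDerivAt (fun τ => ∫ u in (0:ℝ)..τ, F u) (F t) t :=
    intervalIntegral.integral_hasDerivAt_right (hFc.intervalIntegrable _ _)
      hFc.aestronglyMeasurable.stronglyMeasurableAtFilter hFc.continuousAt
  have := hd.hasDerivWithinAt (s := Set.Icc 0 T)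
  rw [hFf t ht] at this
  exact this.congr (fun x hx => (key x hx).symm) (key t ht).symm

/-- difference quotient of `b` along two flow trajectories -/
private noncomputable def cq (b : ℝ → ℝ → ℝ) (X : ℝ → ℝ → ℝ → ℝ) (p q u : ℝ) : ℝ :=
  (b u (X 0 u p) - b u (X 0 u q)) / (X 0 u p - X 0 u q)

private lemma cq_symm (b : ℝ → ℝ → ℝ) (X : ℝ → ℝ → ℝ → ℝ) (p q u : ℝ) :
    cq b X p q u = cq b X q p u := by
  unfold cq
  rcases eq_or_ne (X 0 u p) (X 0 u q) with h | h
  · simp [h, sub_self]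
  · rw [div_eq_div_iff (sub_ne_zero.2 h) (sub_ne_zero.2 (Ne.symm h))]; ring

section Main

variable {T L : ℝ} {b b' : ℝ → ℝ → ℝ} {z : ℝ → ℝ} {X : ℝ → ℝ → ℝ → ℝ} {Y : ℝ → ℝ → ℝ}

/-- MVT: the difference quotient is a value of `b'` at a point between the trajectories. -/
private lemma cq_slope (hderiv : ∀ t ∈ Set.Icc (0 : ℝ) T, ∀ x : ℝ, HasDerivAt (fun y => b t y) (b' t x) x)
    {u : ℝ} (hu : u ∈ Set.Icc (0:ℝ) T) {p q : ℝ} (hpq : X 0 u p ≠ X 0 u q) :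
    ∃ ζ : ℝ, |ζ - X 0 u p| ≤ |X 0 u q - X 0 u p| ∧ cq b X p q u = b' u ζ := by
  have hc : ∀ s : Set ℝ, ContinuousOn (b u) s :=
    fun s x _ => ((hderiv u hu x).continuousAt).continuousWithinAt
  rcases hpq.lt_or_gt with h | h
  · obtain ⟨ζ, hζ, hval⟩ := exists_hasDerivAt_eq_slope (b u) (b' u) h (hc _)
      (fun x _ => hderiv u hu x)
    refine ⟨ζ, ?_, ?_⟩
    · rw [abs_of_pos (sub_pos.2 hζ.1), abs_of_pos (sub_pos.2 h)]
      linarith [hζ.2]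
    · rw [hval]
      unfold cq
      rw [div_eq_div_iff (sub_ne_zero.2 (ne_of_lt h)) (sub_ne_zero.2 (ne_of_gt h))]
      ring
  · obtain ⟨ζ, hζ, hval⟩ := exists_hasDerivAt_eq_slope (b u) (b' u) h (hc _)
      (fun x _ => hderiv u hu x)
    refine ⟨ζ, ?_, ?_⟩
    · rw [abs_of_neg (sub_neg.2 hζ.2), abs_of_neg (sub_neg.2 h)]
      linarith [hζ.1]
    · rw [hval]
      rfl

end Main

section Main2

variable {T L : ℝ} {b b' : ℝ → ℝ → ℝ} {z : ℝ → ℝ} {X : ℝ → ℝ → ℝ → ℝ} {Y : ℝ → ℝ → ℝ}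

private lemma flow_inj (hY : ∀ t ∈ Set.Icc (0 : ℝ) T, ∀ x : ℝ, X 0 t (Y t x) = x ∧ Y t (X 0 t x) = x)
    {u : ℝ} (hu : u ∈ Set.Icc (0:ℝ) T) {p q : ℝ} (h : X 0 u p = X 0 u q) : p = q := by
  rw [← (hY u hu p).2, ← (hY u hu q).2, h]

private lemma b_comp_cont (hb : ContinuousOn (fun p : ℝ × ℝ => b p.1 p.2) (Set.Icc 0 T ×ˢ Set.univ))
    {φ : ℝ → ℝ} (hφ : ContinuousOn φ (Set.Icc 0 T)) :
    ContinuousOn (fun u => b u (φ u)) (Set.Icc 0 T) :=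
  hb.comp (continuousOn_id.prodMk hφ : ContinuousOn (fun u => (u, φ u)) (Set.Icc 0 T)) (fun u hu => ⟨hu, Set.mem_univ _⟩)

private lemma cq_bound (hT : 0 < T)
    (hderiv : ∀ t ∈ Set.Icc (0 : ℝ) T, ∀ x : ℝ, HasDerivAt (fun y => b t y) (b' t x) x)
    (hb'bdd : ∀ t ∈ Set.Icc (0 : ℝ) T, ∀ x : ℝ, |b' t x| ≤ L)
    {u : ℝ} (hu : u ∈ Set.Icc (0:ℝ) T) (p q : ℝ) : |cq b X p q u| ≤ L := by
  rcases eq_or_ne (X 0 u p) (X 0 u q) with h | h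
  · have hz : cq b X p q u = 0 := by simp [cq, h]
    rw [hz, abs_zero]
    exact le_trans (abs_nonneg _) (hb'bdd u hu 0)
  · obtain ⟨ζ, _, hv⟩ := cq_slope hderiv hu h
    rw [hv]; exact hb'bdd u hu ζ

private lemma L_nonneg (hT : 0 < T) (hb'bdd : ∀ t ∈ Set.Icc (0 : ℝ) T, ∀ x : ℝ, |b' t x| ≤ L) :
    0 ≤ L :=
  le_trans (abs_nonneg _) (hb'bdd 0 ⟨le_rfl, hT.le⟩ 0)

private lemma cq_cont (hT : 0 < T)
    (hb : ContinuousOn (fun p : ℝ × ℝ => b p.1 p.2) (Set.Icc 0 T ×ˢ Set.univ))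
    (hXcont : ∀ s ∈ Set.Icc (0 : ℝ) T, ∀ x : ℝ, ContinuousOn (fun t => X s t x) (Set.Icc s T))
    (hY : ∀ t ∈ Set.Icc (0 : ℝ) T, ∀ x : ℝ, X 0 t (Y t x) = x ∧ Y t (X 0 t x) = x)
    {p q : ℝ} (hpq : p ≠ q) : ContinuousOn (cq b X p q) (Set.Icc 0 T) := by
  have h0T : (0:ℝ) ∈ Set.Icc (0:ℝ) T := ⟨le_rfl, hT.le⟩
  exact ((b_comp_cont hb (hXcont 0 h0T p)).sub (b_comp_cont hb (hXcont 0 h0T q))).div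
    ((hXcont 0 h0T p).sub (hXcont 0 h0T q))
    (fun u hu => sub_ne_zero.2 fun h => hpq (flow_inj hY hu h))

private lemma X00 (hT : 0 < T)
    (hXeq : ∀ s ∈ Set.Icc (0 : ℝ) T, ∀ x : ℝ, ∀ t ∈ Set.Icc s T,
      X s t x = x + (∫ u in s..t, b u (X s u x)) + z t - z s) (r : ℝ) : X 0 0 r = r := by
  have := hXeq 0 ⟨le_rfl, hT.le⟩ r 0 ⟨le_rfl, hT.le⟩
  simpa using this

private lemma key_id (hT : 0 < T)
    (hb : ContinuousOn (fun p : ℝ × ℝ => b p.1 p.2) (Set.Icc 0 T ×ˢ Set.univ))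
    (hXcont : ∀ s ∈ Set.Icc (0 : ℝ) T, ∀ x : ℝ, ContinuousOn (fun t => X s t x) (Set.Icc s T))
    (hXeq : ∀ s ∈ Set.Icc (0 : ℝ) T, ∀ x : ℝ, ∀ t ∈ Set.Icc s T,
      X s t x = x + (∫ u in s..t, b u (X s u x)) + z t - z s)
    (hY : ∀ t ∈ Set.Icc (0 : ℝ) T, ∀ x : ℝ, X 0 t (Y t x) = x ∧ Y t (X 0 t x) = x)
    {p q : ℝ} (hpq : p ≠ q) :
    ∀ τ ∈ Set.Icc (0:ℝ) T,
      X 0 τ p - X 0 τ q = (p - q) * Real.exp (∫ u in (0:ℝ)..τ, cq b X p q u) := by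
  have h0T : (0:ℝ) ∈ Set.Icc (0:ℝ) T := ⟨le_rfl, hT.le⟩
  set w : ℝ → ℝ := fun τ => X 0 τ p - X 0 τ q with hw
  have hwc : ContinuousOn w (Set.Icc 0 T) := (hXcont 0 h0T p).sub (hXcont 0 h0T q)
  have hcc : ContinuousOn (cq b X p q) (Set.Icc 0 T) := cq_cont hT hb hXcont hY hpq
  have hfc : ContinuousOn (fun u => cq b X p q u * w u) (Set.Icc 0 T) := hcc.mul hwc
  have hw_eq : ∀ τ ∈ Set.Icc (0:ℝ) T, w τ = (p - q) + ∫ u in (0:ℝ)..τ, cq b X p q u * w u := by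
    intro τ hτ
    have hp := hXeq 0 h0T p τ hτ
    have hq := hXeq 0 h0T q τ hτ
    have hintp : IntervalIntegrable (fun u => b u (X 0 u p)) volume 0 τ :=
      ((b_comp_cont hb (hXcont 0 h0T p)).mono
        (by rw [Set.uIcc_of_le hτ.1]; exact Set.Icc_subset_Icc le_rfl hτ.2)).intervalIntegrable
    have hintq : IntervalIntegrable (fun u => b u (X 0 u q)) volume 0 τ :=
      ((b_comp_cont hb (hXcont 0 h0T q)).mono
        (by rw [Set.uIcc_of_le hτ.1]; exact Set.Icc_subset_Icc le_rfl hτ.2)).intervalIntegrable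
    have hsub : (∫ u in (0:ℝ)..τ, (b u (X 0 u p) - b u (X 0 u q)))
        = ∫ u in (0:ℝ)..τ, cq b X p q u * w u := by
      refine intervalIntegral.integral_congr fun u hu => ?_
      rw [Set.uIcc_of_le hτ.1] at hu
      have hu' : u ∈ Set.Icc (0:ℝ) T := ⟨hu.1, le_trans hu.2 hτ.2⟩
      have hne : X 0 u p - X 0 u q ≠ 0 :=
        sub_ne_zero.2 fun h => hpq (flow_inj hY hu' h)
      show _ = cq b X p q u * (X 0 u p - X 0 u q)
      rw [cq, div_mul_cancel₀ _ hne]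
    rw [hw, ← hsub, intervalIntegral.integral_sub hintp hintq]
    show X 0 τ p - X 0 τ q = _
    rw [hp, hq]; ring
  have hwd : ∀ τ ∈ Set.Icc (0:ℝ) T,
      HasDerivWithinAt w (cq b X p q τ * w τ) (Set.Icc 0 T) τ := by
    intro τ hτ
    have := (ftc_Icc hT.le hfc hτ).const_add (p - q)
    exact this.congr (fun s hs => hw_eq s hs) (hw_eq τ hτ)
  set h : ℝ → ℝ := fun τ => w τ * Real.exp (-∫ u in (0:ℝ)..τ, cq b X p q u) with hh
  have hhd : ∀ τ ∈ Set.Icc (0:ℝ) T, HasDerivWithinAt h 0 (Set.Icc 0 T) τ := by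
    intro τ hτ
    have h2 := ((ftc_Icc hT.le hcc hτ).neg).exp
    refine ((hwd τ hτ).mul h2).congr_deriv ?_
    ring
  have hconst : ∀ τ ∈ Set.Icc (0:ℝ) T, h τ = h 0 := by
    refine constant_of_has_deriv_right_zero (fun τ hτ => (hhd τ hτ).continuousWithinAt) ?_
    intro x hx
    exact (hhd x (Set.Ico_subset_Icc_self hx)).mono_of_mem_nhdsWithin (Icc_mem_nhdsGE_of_mem hx)
  have hw0 : w 0 = p - q := by rw [hw]; show X 0 0 p - X 0 0 q = p - q
                               rw [X00 hT hXeq, X00 hT hXeq]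
  intro τ hτ
  have h0 : h 0 = p - q := by
    rw [hh]; show w 0 * Real.exp (-∫ u in (0:ℝ)..(0:ℝ), cq b X p q u) = p - q
    rw [intervalIntegral.integral_same, neg_zero, Real.exp_zero, mul_one, hw0]
  have hc := hconst τ hτ
  rw [h0] at hc
  have hc' : w τ * Real.exp (-∫ u in (0:ℝ)..τ, cq b X p q u) = p - q := hc
  have : w τ = (p - q) * Real.exp (∫ u in (0:ℝ)..τ, cq b X p q u) := by
    have he : Real.exp (-∫ u in (0:ℝ)..τ, cq b X p q u)
        * Real.exp (∫ u in (0:ℝ)..τ, cq b X p q u) = 1 := by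
      rw [← Real.exp_add, neg_add_cancel, Real.exp_zero]
    calc w τ = w τ * (Real.exp (-∫ u in (0:ℝ)..τ, cq b X p q u)
          * Real.exp (∫ u in (0:ℝ)..τ, cq b X p q u)) := by rw [he, mul_one]
      _ = (p - q) * Real.exp (∫ u in (0:ℝ)..τ, cq b X p q u) := by rw [← mul_assoc, hc']
  exact this

end Main2

section Main3

variable {T L : ℝ} {b b' : ℝ → ℝ → ℝ} {z : ℝ → ℝ} {X : ℝ → ℝ → ℝ → ℝ} {Y : ℝ → ℝ → ℝ}

private lemma int_cq_bound (hT : 0 < T)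
    (hb : ContinuousOn (fun p : ℝ × ℝ => b p.1 p.2) (Set.Icc 0 T ×ˢ Set.univ))
    (hderiv : ∀ t ∈ Set.Icc (0 : ℝ) T, ∀ x : ℝ, HasDerivAt (fun y => b t y) (b' t x) x)
    (hb'bdd : ∀ t ∈ Set.Icc (0 : ℝ) T, ∀ x : ℝ, |b' t x| ≤ L)
    {τ : ℝ} (hτ : τ ∈ Set.Icc (0:ℝ) T) (p q : ℝ) :
    |∫ u in (0:ℝ)..τ, cq b X p q u| ≤ L * T := by
  have h1 : |∫ u in (0:ℝ)..τ, cq b X p q u| ≤ L * |τ - 0| := by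
    rw [← Real.norm_eq_abs]
    apply intervalIntegral.norm_integral_le_of_norm_le_const
    intro x hx
    rw [Set.uIoc_of_le hτ.1] at hx
    exact cq_bound hT hderiv hb'bdd ⟨hx.1.le, le_trans hx.2 hτ.2⟩ p q
  calc |∫ u in (0:ℝ)..τ, cq b X p q u| ≤ L * |τ - 0| := h1
    _ ≤ L * T := by
        rw [sub_zero, abs_of_nonneg hτ.1]
        exact mul_le_mul_of_nonneg_left hτ.2 (L_nonneg hT hb'bdd)

/-- forward Lipschitz bound for the flow -/
private lemma flow_lip (hT : 0 < T)
    (hb : ContinuousOn (fun p : ℝ × ℝ => b p.1 p.2) (Set.Icc 0 T ×ˢ Set.univ))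
    (hderiv : ∀ t ∈ Set.Icc (0 : ℝ) T, ∀ x : ℝ, HasDerivAt (fun y => b t y) (b' t x) x)
    (hb'bdd : ∀ t ∈ Set.Icc (0 : ℝ) T, ∀ x : ℝ, |b' t x| ≤ L)
    (hXcont : ∀ s ∈ Set.Icc (0 : ℝ) T, ∀ x : ℝ, ContinuousOn (fun t => X s t x) (Set.Icc s T))
    (hXeq : ∀ s ∈ Set.Icc (0 : ℝ) T, ∀ x : ℝ, ∀ t ∈ Set.Icc s T,
      X s t x = x + (∫ u in s..t, b u (X s u x)) + z t - z s)
    (hY : ∀ t ∈ Set.Icc (0 : ℝ) T, ∀ x : ℝ, X 0 t (Y t x) = x ∧ Y t (X 0 t x) = x)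
    {τ : ℝ} (hτ : τ ∈ Set.Icc (0:ℝ) T) (p q : ℝ) :
    |X 0 τ p - X 0 τ q| ≤ Real.exp (L * T) * |p - q| := by
  rcases eq_or_ne p q with rfl | hpq
  · simp [sub_self]
  · rw [key_id hT hb hXcont hXeq hY hpq τ hτ, abs_mul, Real.abs_exp, mul_comm]
    exact mul_le_mul_of_nonneg_right
      (Real.exp_le_exp.2 (le_trans (le_abs_self _) (int_cq_bound hT hb hderiv hb'bdd hτ p q)))
      (abs_nonneg _)

/-- Lipschitz bound for the inverse flow -/
private lemma Y_lip (hT : 0 < T)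
    (hb : ContinuousOn (fun p : ℝ × ℝ => b p.1 p.2) (Set.Icc 0 T ×ˢ Set.univ))
    (hderiv : ∀ t ∈ Set.Icc (0 : ℝ) T, ∀ x : ℝ, HasDerivAt (fun y => b t y) (b' t x) x)
    (hb'bdd : ∀ t ∈ Set.Icc (0 : ℝ) T, ∀ x : ℝ, |b' t x| ≤ L)
    (hXcont : ∀ s ∈ Set.Icc (0 : ℝ) T, ∀ x : ℝ, ContinuousOn (fun t => X s t x) (Set.Icc s T))
    (hXeq : ∀ s ∈ Set.Icc (0 : ℝ) T, ∀ x : ℝ, ∀ t ∈ Set.Icc s T,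
      X s t x = x + (∫ u in s..t, b u (X s u x)) + z t - z s)
    (hY : ∀ t ∈ Set.Icc (0 : ℝ) T, ∀ x : ℝ, X 0 t (Y t x) = x ∧ Y t (X 0 t x) = x)
    {τ : ℝ} (hτ : τ ∈ Set.Icc (0:ℝ) T) (v w : ℝ) :
    |Y τ v - Y τ w| ≤ Real.exp (L * T) * |v - w| := by
  rcases eq_or_ne (Y τ v) (Y τ w) with h | h
  · rw [h, sub_self, abs_zero]
    positivity
  · have hk := key_id hT hb hXcont hXeq hY h τ hτ
    rw [(hY τ hτ v).1, (hY τ hτ w).1] at hk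
    have : |v - w| = |Y τ v - Y τ w| * Real.exp (∫ u in (0:ℝ)..τ, cq b X (Y τ v) (Y τ w) u) := by
      rw [hk, abs_mul, Real.abs_exp]
    have hexp : Real.exp (-(L*T)) ≤ Real.exp (∫ u in (0:ℝ)..τ, cq b X (Y τ v) (Y τ w) u) :=
      Real.exp_le_exp.2 (neg_le_of_abs_le (int_cq_bound hT hb hderiv hb'bdd hτ _ _))
    have h2 : |Y τ v - Y τ w| * Real.exp (-(L*T)) ≤ |v - w| := by
      rw [this]
      exact mul_le_mul_of_nonneg_left hexp (abs_nonneg _)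
    calc |Y τ v - Y τ w| = |Y τ v - Y τ w| * Real.exp (-(L*T)) * Real.exp (L*T) := by
          rw [mul_assoc, ← Real.exp_add, neg_add_cancel, Real.exp_zero, mul_one]
      _ ≤ |v - w| * Real.exp (L*T) := mul_le_mul_of_nonneg_right h2 (Real.exp_pos _).le
      _ = Real.exp (L * T) * |v - w| := mul_comm _ _

/-- uniform modulus of continuity for `b'` near the trajectory of `x₀` -/
private lemma modulus (hT : 0 < T)
    (hb'c : ContinuousOn (fun p : ℝ × ℝ => b' p.1 p.2) (Set.Icc 0 T ×ˢ Set.univ))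
    (hXcont : ∀ s ∈ Set.Icc (0 : ℝ) T, ∀ x : ℝ, ContinuousOn (fun t => X s t x) (Set.Icc s T))
    (x₀ : ℝ) {ε : ℝ} (hε : 0 < ε) :
    ∃ δ > 0, ∀ u ∈ Set.Icc (0:ℝ) T, ∀ ζ : ℝ, |ζ - X 0 u x₀| ≤ δ →
      |b' u ζ - b' u (X 0 u x₀)| ≤ ε := by
  have h0T : (0:ℝ) ∈ Set.Icc (0:ℝ) T := ⟨le_rfl, hT.le⟩
  set K : Set ℝ := (fun u => X 0 u x₀) '' Set.Icc 0 T with hK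
  have hKc : IsCompact K := (isCompact_Icc.image_of_continuousOn (hXcont 0 h0T x₀))
  set K₁ : Set ℝ := Metric.cthickening 1 K with hK₁
  have hK₁c : IsCompact K₁ := hKc.cthickening
  have hS : IsCompact (Set.Icc (0:ℝ) T ×ˢ K₁) := isCompact_Icc.prod hK₁c
  have hsub : Set.Icc (0:ℝ) T ×ˢ K₁ ⊆ Set.Icc 0 T ×ˢ (Set.univ : Set ℝ) :=
    Set.prod_mono_right (Set.subset_univ _)
  have huc : UniformContinuousOn (fun p : ℝ × ℝ => b' p.1 p.2) (Set.Icc (0:ℝ) T ×ˢ K₁) :=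
    hS.uniformContinuousOn_of_continuous (hb'c.mono hsub)
  rw [Metric.uniformContinuousOn_iff] at huc
  obtain ⟨δ, hδ, hucd⟩ := huc ε hε
  refine ⟨min (δ/2) 1, by positivity, ?_⟩
  intro u hu ζ hζ
  have hφK : X 0 u x₀ ∈ K := Set.mem_image_of_mem _ hu
  have hφK₁ : X 0 u x₀ ∈ K₁ := Metric.self_subset_cthickening _ hφK
  have hζK₁ : ζ ∈ K₁ := by
    apply Metric.mem_cthickening_of_dist_le ζ (X 0 u x₀) 1 K hφK
    rw [Real.dist_eq]
    exact le_trans hζ (min_le_right _ _)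
  have hdist : dist ((u, ζ) : ℝ × ℝ) (u, X 0 u x₀) < δ := by
    rw [Prod.dist_eq]
    simp only [dist_self]
    rw [Real.dist_eq]
    calc max 0 |ζ - X 0 u x₀| ≤ min (δ/2) 1 := max_le (by positivity) hζ
      _ < δ := lt_of_le_of_lt (min_le_left _ _) (by linarith)
  have := hucd (u, ζ) ⟨hu, hζK₁⟩ (u, X 0 u x₀) ⟨hu, hφK₁⟩ hdist
  rw [Real.dist_eq] at this
  exact this.le

end Main3

section Main4

variable {T L : ℝ} {b b' : ℝ → ℝ → ℝ} {z : ℝ → ℝ} {X : ℝ → ℝ → ℝ → ℝ} {Y : ℝ → ℝ → ℝ}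

private lemma Jconv (hT : 0 < T)
    (hb : ContinuousOn (fun p : ℝ × ℝ => b p.1 p.2) (Set.Icc 0 T ×ˢ Set.univ))
    (hderiv : ∀ t ∈ Set.Icc (0 : ℝ) T, ∀ x : ℝ, HasDerivAt (fun y => b t y) (b' t x) x)
    (hb'c : ContinuousOn (fun p : ℝ × ℝ => b' p.1 p.2) (Set.Icc 0 T ×ˢ Set.univ))
    (hb'bdd : ∀ t ∈ Set.Icc (0 : ℝ) T, ∀ x : ℝ, |b' t x| ≤ L)
    (hXcont : ∀ s ∈ Set.Icc (0 : ℝ) T, ∀ x : ℝ, ContinuousOn (fun t => X s t x) (Set.Icc s T))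
    (hXeq : ∀ s ∈ Set.Icc (0 : ℝ) T, ∀ x : ℝ, ∀ t ∈ Set.Icc s T,
      X s t x = x + (∫ u in s..t, b u (X s u x)) + z t - z s)
    (hY : ∀ t ∈ Set.Icc (0 : ℝ) T, ∀ x : ℝ, X 0 t (Y t x) = x ∧ Y t (X 0 t x) = x)
    (x₀ : ℝ) {ε : ℝ} (hε : 0 < ε) :
    ∃ δ > 0, ∀ p : ℝ, p ≠ x₀ → |p - x₀| ≤ δ → ∀ τ ∈ Set.Icc (0:ℝ) T,
      |(∫ u in (0:ℝ)..τ, cq b X x₀ p u) - ∫ u in (0:ℝ)..τ, b' u (X 0 u x₀)| ≤ ε := by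
  have h0T : (0:ℝ) ∈ Set.Icc (0:ℝ) T := ⟨le_rfl, hT.le⟩
  have hε' : 0 < ε / (T + 1) := by positivity
  obtain ⟨δ', hδ', hmod⟩ := modulus hT hb'c hXcont x₀ hε'
  refine ⟨δ' / Real.exp (L * T), by positivity, ?_⟩
  intro p hpne hpd τ hτ
  have hpoint : ∀ u ∈ Set.Icc (0:ℝ) T,
      |cq b X x₀ p u - b' u (X 0 u x₀)| ≤ ε / (T + 1) := by
    intro u hu
    have hXne : X 0 u x₀ ≠ X 0 u p := fun h => hpne ((flow_inj hY hu h).symm)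
    obtain ⟨ζ, hζ, hval⟩ := cq_slope hderiv hu hXne
    rw [hval]
    apply hmod u hu ζ
    calc |ζ - X 0 u x₀| ≤ |X 0 u p - X 0 u x₀| := hζ
      _ ≤ Real.exp (L * T) * |p - x₀| := flow_lip hT hb hderiv hb'bdd hXcont hXeq hY hu p x₀
      _ ≤ Real.exp (L * T) * (δ' / Real.exp (L * T)) :=
          mul_le_mul_of_nonneg_left hpd (Real.exp_pos _).le
      _ = δ' := by field_simp
  have hcc : ContinuousOn (cq b X x₀ p) (Set.Icc 0 T) := cq_cont hT hb hXcont hY (Ne.symm hpne)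
  have hb'cc : ContinuousOn (fun u => b' u (X 0 u x₀)) (Set.Icc 0 T) :=
    hb'c.comp (continuousOn_id.prodMk (hXcont 0 h0T x₀) :
      ContinuousOn (fun u => (u, X 0 u x₀)) (Set.Icc 0 T)) (fun u hu => ⟨hu, Set.mem_univ _⟩)
  have hsubIcc : Set.uIcc (0:ℝ) τ ⊆ Set.Icc 0 T := by
    rw [Set.uIcc_of_le hτ.1]; exact Set.Icc_subset_Icc le_rfl hτ.2
  have hint1 : IntervalIntegrable (cq b X x₀ p) volume 0 τ :=
    (hcc.mono hsubIcc).intervalIntegrable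
  have hint2 : IntervalIntegrable (fun u => b' u (X 0 u x₀)) volume 0 τ :=
    (hb'cc.mono hsubIcc).intervalIntegrable
  rw [← intervalIntegral.integral_sub hint1 hint2]
  have h1 : |∫ u in (0:ℝ)..τ, (cq b X x₀ p u - b' u (X 0 u x₀))| ≤ (ε / (T+1)) * |τ - 0| := by
    rw [← Real.norm_eq_abs]
    apply intervalIntegral.norm_integral_le_of_norm_le_const
    intro x hx
    rw [Set.uIoc_of_le hτ.1] at hx
    exact hpoint x ⟨hx.1.le, le_trans hx.2 hτ.2⟩
  calc |∫ u in (0:ℝ)..τ, (cq b X x₀ p u - b' u (X 0 u x₀))| ≤ (ε / (T+1)) * |τ - 0| := h1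
    _ ≤ (ε / (T+1)) * T := by
        rw [sub_zero, abs_of_nonneg hτ.1]
        exact mul_le_mul_of_nonneg_left hτ.2 hε'.le
    _ ≤ ε := by rw [div_mul_eq_mul_div, div_le_iff₀ (by linarith)]; nlinarith

private lemma Xderiv (hT : 0 < T)
    (hb : ContinuousOn (fun p : ℝ × ℝ => b p.1 p.2) (Set.Icc 0 T ×ˢ Set.univ))
    (hderiv : ∀ t ∈ Set.Icc (0 : ℝ) T, ∀ x : ℝ, HasDerivAt (fun y => b t y) (b' t x) x)
    (hb'c : ContinuousOn (fun p : ℝ × ℝ => b' p.1 p.2) (Set.Icc 0 T ×ˢ Set.univ))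
    (hb'bdd : ∀ t ∈ Set.Icc (0 : ℝ) T, ∀ x : ℝ, |b' t x| ≤ L)
    (hXcont : ∀ s ∈ Set.Icc (0 : ℝ) T, ∀ x : ℝ, ContinuousOn (fun t => X s t x) (Set.Icc s T))
    (hXeq : ∀ s ∈ Set.Icc (0 : ℝ) T, ∀ x : ℝ, ∀ t ∈ Set.Icc s T,
      X s t x = x + (∫ u in s..t, b u (X s u x)) + z t - z s)
    (hY : ∀ t ∈ Set.Icc (0 : ℝ) T, ∀ x : ℝ, X 0 t (Y t x) = x ∧ Y t (X 0 t x) = x)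
    {t : ℝ} (ht : t ∈ Set.Icc (0:ℝ) T) (x₀ : ℝ) :
    HasDerivAt (fun p => X 0 t p) (Real.exp (∫ u in (0:ℝ)..t, b' u (X 0 u x₀))) x₀ := by
  rw [hasDerivAt_iff_tendsto_slope]
  have hJ : Filter.Tendsto (fun p => ∫ u in (0:ℝ)..t, cq b X x₀ p u) (nhdsWithin x₀ {x₀}ᶜ)
      (nhds (∫ u in (0:ℝ)..t, b' u (X 0 u x₀))) := by
    rw [Metric.tendsto_nhdsWithin_nhds]
    intro ε hε
    obtain ⟨δ, hδ, hJc⟩ := Jconv hT hb hderiv hb'c hb'bdd hXcont hXeq hY x₀ (half_pos hε)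
    refine ⟨δ, hδ, ?_⟩
    intro p hp hpd
    rw [Real.dist_eq] at hpd ⊢
    exact lt_of_le_of_lt (hJc p hp hpd.le t ht) (half_lt_self hε)
  have hE := (Real.continuous_exp.tendsto _).comp hJ
  apply hE.congr'
  filter_upwards [self_mem_nhdsWithin] with p hp
  have hpne : (x₀ : ℝ) ≠ p := fun h => hp (by simp [h.symm])
  have hk := key_id hT hb hXcont hXeq hY hpne t ht
  show Real.exp (∫ u in (0:ℝ)..t, cq b X x₀ p u) = slope (fun p => X 0 t p) x₀ p
  have hk' : X 0 t p - X 0 t x₀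
      = (p - x₀) * Real.exp (∫ u in (0:ℝ)..t, cq b X x₀ p u) := by
    rw [← neg_sub (X 0 t x₀), hk]; ring
  rw [slope_def_field, hk', mul_comm, mul_div_assoc,
    div_self (sub_ne_zero.2 (fun h => hpne h.symm)), mul_one]

private lemma Ycont (hT : 0 < T)
    (hb : ContinuousOn (fun p : ℝ × ℝ => b p.1 p.2) (Set.Icc 0 T ×ˢ Set.univ))
    (hderiv : ∀ t ∈ Set.Icc (0 : ℝ) T, ∀ x : ℝ, HasDerivAt (fun y => b t y) (b' t x) x)
    (hb'bdd : ∀ t ∈ Set.Icc (0 : ℝ) T, ∀ x : ℝ, |b' t x| ≤ L)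
    (hXcont : ∀ s ∈ Set.Icc (0 : ℝ) T, ∀ x : ℝ, ContinuousOn (fun t => X s t x) (Set.Icc s T))
    (hXeq : ∀ s ∈ Set.Icc (0 : ℝ) T, ∀ x : ℝ, ∀ t ∈ Set.Icc s T,
      X s t x = x + (∫ u in s..t, b u (X s u x)) + z t - z s)
    (hY : ∀ t ∈ Set.Icc (0 : ℝ) T, ∀ x : ℝ, X 0 t (Y t x) = x ∧ Y t (X 0 t x) = x)
    {t : ℝ} (ht : t ∈ Set.Icc (0:ℝ) T) : Continuous (Y t) := by
  apply (LipschitzWith.of_dist_le_mul (K := Real.toNNReal (Real.exp (L * T)))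
    (f := Y t) ?_).continuous
  intro v w
  rw [Real.dist_eq, Real.dist_eq, Real.coe_toNNReal _ (Real.exp_pos _).le]
  exact Y_lip hT hb hderiv hb'bdd hXcont hXeq hY ht v w

private lemma Yderiv (hT : 0 < T)
    (hb : ContinuousOn (fun p : ℝ × ℝ => b p.1 p.2) (Set.Icc 0 T ×ˢ Set.univ))
    (hderiv : ∀ t ∈ Set.Icc (0 : ℝ) T, ∀ x : ℝ, HasDerivAt (fun y => b t y) (b' t x) x)
    (hb'c : ContinuousOn (fun p : ℝ × ℝ => b' p.1 p.2) (Set.Icc 0 T ×ˢ Set.univ))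
    (hb'bdd : ∀ t ∈ Set.Icc (0 : ℝ) T, ∀ x : ℝ, |b' t x| ≤ L)
    (hXcont : ∀ s ∈ Set.Icc (0 : ℝ) T, ∀ x : ℝ, ContinuousOn (fun t => X s t x) (Set.Icc s T))
    (hXeq : ∀ s ∈ Set.Icc (0 : ℝ) T, ∀ x : ℝ, ∀ t ∈ Set.Icc s T,
      X s t x = x + (∫ u in s..t, b u (X s u x)) + z t - z s)
    (hY : ∀ t ∈ Set.Icc (0 : ℝ) T, ∀ x : ℝ, X 0 t (Y t x) = x ∧ Y t (X 0 t x) = x)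
    {t : ℝ} (ht : t ∈ Set.Icc (0:ℝ) T) (x : ℝ) :
    HasDerivAt (Y t) (Real.exp (-∫ u in (0:ℝ)..t, b' u (X 0 u (Y t x)))) x := by
  have hXd := Xderiv hT hb hderiv hb'c hb'bdd hXcont hXeq hY ht (Y t x)
  have h := HasDerivAt.of_local_left_inverse
    ((Ycont hT hb hderiv hb'bdd hXcont hXeq hY ht).continuousAt)
    hXd (Real.exp_ne_zero _)
    (Filter.Eventually.of_forall (fun y => (hY t ht y).1))
  rwa [← Real.exp_neg] at h

end Main4

section Main5

variable {T L : ℝ} {b b' : ℝ → ℝ → ℝ} {z : ℝ → ℝ} {X : ℝ → ℝ → ℝ → ℝ} {Y : ℝ → ℝ → ℝ}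

private lemma Ytderiv (hT : 0 < T)
    (hb : ContinuousOn (fun p : ℝ × ℝ => b p.1 p.2) (Set.Icc 0 T ×ˢ Set.univ))
    (hderiv : ∀ t ∈ Set.Icc (0 : ℝ) T, ∀ x : ℝ, HasDerivAt (fun y => b t y) (b' t x) x)
    (hb'c : ContinuousOn (fun p : ℝ × ℝ => b' p.1 p.2) (Set.Icc 0 T ×ˢ Set.univ))
    (hb'bdd : ∀ t ∈ Set.Icc (0 : ℝ) T, ∀ x : ℝ, |b' t x| ≤ L)
    (hz : ContDiff ℝ 1 z)
    (hXcont : ∀ s ∈ Set.Icc (0 : ℝ) T, ∀ x : ℝ, ContinuousOn (fun t => X s t x) (Set.Icc s T))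
    (hXeq : ∀ s ∈ Set.Icc (0 : ℝ) T, ∀ x : ℝ, ∀ t ∈ Set.Icc s T,
      X s t x = x + (∫ u in s..t, b u (X s u x)) + z t - z s)
    (hY : ∀ t ∈ Set.Icc (0 : ℝ) T, ∀ x : ℝ, X 0 t (Y t x) = x ∧ Y t (X 0 t x) = x)
    {t : ℝ} (ht : t ∈ Set.Icc (0:ℝ) T) (x : ℝ) :
    HasDerivWithinAt (fun τ => Y τ x)
      (-(b t x + deriv z t) * Real.exp (-∫ u in (0:ℝ)..t, b' u (X 0 u (Y t x))))
      (Set.Icc 0 T) t := by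
  have h0T : (0:ℝ) ∈ Set.Icc (0:ℝ) T := ⟨le_rfl, hT.le⟩
  set y₀ : ℝ := Y t x with hy₀
  set γ : ℝ → ℝ := fun τ => X 0 τ y₀ with hγ
  have hγt : γ t = x := (hY t ht x).1
  have hγc : ContinuousOn γ (Set.Icc 0 T) := hXcont 0 h0T y₀
  set g : ℝ := b t x + deriv z t with hg
  set D : ℝ := Real.exp (-∫ u in (0:ℝ)..t, b' u (X 0 u y₀)) with hD
  -- derivative of the characteristic curve γ
  have hγd : HasDerivWithinAt γ g (Set.Icc 0 T) t := by
    have h1 := ftc_Icc hT.le (b_comp_cont hb hγc) ht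
    have hzd : HasDerivAt z (deriv z t) t := ((hz.differentiable one_ne_zero) t).hasDerivAt
    have h2 : HasDerivWithinAt (fun τ => y₀ + (∫ u in (0:ℝ)..τ, b u (γ u)) + z τ - z 0)
        (b t (γ t) + deriv z t) (Set.Icc 0 T) t :=
      ((h1.const_add y₀).add (hzd.hasDerivWithinAt)).sub_const (z 0)
    rw [hγt] at h2
    exact h2.congr (fun τ hτ => hXeq 0 h0T y₀ τ hτ) (hXeq 0 h0T y₀ t ht)
  rw [hasDerivWithinAt_iff_tendsto_slope]
  set s' : Set ℝ := Set.Icc 0 T \ {t} with hs'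
  set S : Set ℝ := {τ : ℝ | γ τ = x} with hS
  have hsplit : 𝓝[s'] t = 𝓝[s' ∩ S] t ⊔ 𝓝[s' \ S] t := by
    rw [← nhdsWithin_union, Set.inter_union_diff]
  have hγslope : Filter.Tendsto (slope γ t) (𝓝[s'] t) (𝓝 g) :=
    hasDerivWithinAt_iff_tendsto_slope.mp hγd
  -- slope is 0 on S
  have hYeqS : ∀ τ ∈ s' ∩ S, Y τ x = y₀ := by
    intro τ hτ
    calc Y τ x = Y τ (X 0 τ y₀) := by rw [show X 0 τ y₀ = x from hτ.2]
      _ = y₀ := (hY τ hτ.1.1 y₀).2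
  have hslope0 : ∀ τ ∈ s' ∩ S, slope (fun τ => Y τ x) t τ = 0 := by
    intro τ hτ
    rw [slope_def_field, hYeqS τ hτ, ← hy₀, sub_self, zero_div]
  -- slope formula off S
  have hYneS : ∀ τ ∈ s' \ S, Y τ x ≠ y₀ := by
    intro τ hτ h
    exact hτ.2 (by rw [hS, Set.mem_setOf_eq, hγ]; rw [← h]; exact (hY τ hτ.1.1 x).1)
  have hslopeEq : ∀ τ ∈ s' \ S, slope (fun τ => Y τ x) t τ
      = ((x - γ τ)/(τ - t)) * Real.exp (-∫ u in (0:ℝ)..τ, cq b X y₀ (Y τ x) u) := by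
    intro τ hτ
    have hne : y₀ ≠ Y τ x := fun h => hYneS τ hτ h.symm
    have hk := key_id hT hb hXcont hXeq hY hne τ hτ.1.1
    rw [(hY τ hτ.1.1 x).1] at hk
    -- hk : X 0 τ y₀ - x = (y₀ - Y τ x) * exp(∫ cq)
    have h1 : Y τ x - y₀ = (x - γ τ) * Real.exp (-∫ u in (0:ℝ)..τ, cq b X y₀ (Y τ x) u) := by
      have he : Real.exp (∫ u in (0:ℝ)..τ, cq b X y₀ (Y τ x) u)
          * Real.exp (-∫ u in (0:ℝ)..τ, cq b X y₀ (Y τ x) u) = 1 := by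
        rw [← Real.exp_add, add_neg_cancel, Real.exp_zero]
      calc Y τ x - y₀ = -((y₀ - Y τ x) * (Real.exp (∫ u in (0:ℝ)..τ, cq b X y₀ (Y τ x) u)
            * Real.exp (-∫ u in (0:ℝ)..τ, cq b X y₀ (Y τ x) u))) := by rw [he]; ring
        _ = -((γ τ - x) * Real.exp (-∫ u in (0:ℝ)..τ, cq b X y₀ (Y τ x) u)) := by
            rw [← mul_assoc, ← hk]
        _ = (x - γ τ) * Real.exp (-∫ u in (0:ℝ)..τ, cq b X y₀ (Y τ x) u) := by ring
    rw [slope_def_field, ← hy₀, h1]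
    ring
  -- limit of the prefactor
  have hA : Filter.Tendsto (fun τ => (x - γ τ)/(τ - t)) (𝓝[s'] t) (𝓝 (-g)) := by
    apply hγslope.neg.congr
    intro τ
    rw [slope_def_field, hγt]
    ring
  -- limit of the exponential factor off S
  have hE : Filter.Tendsto (fun τ => Real.exp (-∫ u in (0:ℝ)..τ, cq b X y₀ (Y τ x) u))
      (𝓝[s' \ S] t) (𝓝 D) := by
    rw [hD]
    apply (Real.continuous_exp.tendsto _).comp
    apply Filter.Tendsto.neg
    -- tendsto of the integrals
    rw [Metric.tendsto_nhds]
    intro ε hε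
    have hε3 : 0 < ε/3 := by positivity
    obtain ⟨δ₁, hδ₁, hJc⟩ := Jconv hT hb hderiv hb'c hb'bdd hXcont hXeq hY y₀ hε3
    have hγcw : Filter.Tendsto γ (𝓝[s' \ S] t) (𝓝 x) := by
      have := (hγc t ht).tendsto
      rw [hγt] at this
      exact this.mono_left (nhdsWithin_mono t (fun τ hτ => hτ.1.1))
    have he1 : ∀ᶠ τ in 𝓝[s' \ S] t, |γ τ - x| < δ₁ * Real.exp (-(L*T)) := by
      have := hγcw (Metric.ball_mem_nhds x (by positivity : (0:ℝ) < δ₁ * Real.exp (-(L*T))))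
      filter_upwards [this] with τ hτ
      simpa [Metric.mem_ball, Real.dist_eq] using hτ
    have he2 : ∀ᶠ τ in 𝓝[s' \ S] t, |τ - t| < ε/(3*(L+1)) := by
      have hL : 0 ≤ L := L_nonneg hT hb'bdd
      have : Filter.Tendsto (fun τ : ℝ => τ) (𝓝[s' \ S] t) (𝓝 t) :=
        tendsto_id.mono_left nhdsWithin_le_nhds
      have := this (Metric.ball_mem_nhds t (by positivity : (0:ℝ) < ε/(3*(L+1))))
      filter_upwards [this] with τ hτ
      simpa [Metric.mem_ball, Real.dist_eq] using hτ
    filter_upwards [he1, he2, self_mem_nhdsWithin] with τ hτ1 hτ2 hτm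
    have hτIcc : τ ∈ Set.Icc (0:ℝ) T := hτm.1.1
    have hL : 0 ≤ L := L_nonneg hT hb'bdd
    -- |Y τ x - y₀| ≤ δ₁
    have hYd : |Y τ x - y₀| ≤ δ₁ := by
      have h1 : Y τ (γ τ) = y₀ := (hY τ hτIcc y₀).2
      calc |Y τ x - y₀| = |Y τ x - Y τ (γ τ)| := by rw [h1]
        _ ≤ Real.exp (L*T) * |x - γ τ| := Y_lip hT hb hderiv hb'bdd hXcont hXeq hY hτIcc x (γ τ)
        _ ≤ Real.exp (L*T) * (δ₁ * Real.exp (-(L*T))) := by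
            apply mul_le_mul_of_nonneg_left _ (Real.exp_pos _).le
            rw [abs_sub_comm]; exact hτ1.le
        _ = δ₁ := by rw [mul_comm, mul_assoc, ← Real.exp_add, neg_add_cancel,
              Real.exp_zero, mul_one]
    have hJ1 : |(∫ u in (0:ℝ)..τ, cq b X y₀ (Y τ x) u)
        - ∫ u in (0:ℝ)..τ, b' u (X 0 u y₀)| ≤ ε/3 :=
      hJc (Y τ x) (hYneS τ hτm) hYd τ hτIcc
    -- second piece
    have hb'cc : ContinuousOn (fun u => b' u (X 0 u y₀)) (Set.Icc 0 T) :=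
      hb'c.comp (continuousOn_id.prodMk (hXcont 0 h0T y₀) :
        ContinuousOn (fun u => (u, X 0 u y₀)) (Set.Icc 0 T)) (fun u hu => ⟨hu, Set.mem_univ _⟩)
    have hintτ : IntervalIntegrable (fun u => b' u (X 0 u y₀)) volume 0 τ :=
      (hb'cc.mono (by rw [Set.uIcc_of_le hτIcc.1]; exact Set.Icc_subset_Icc le_rfl hτIcc.2)).intervalIntegrable
    have hintt : IntervalIntegrable (fun u => b' u (X 0 u y₀)) volume 0 t :=
      (hb'cc.mono (by rw [Set.uIcc_of_le ht.1]; exact Set.Icc_subset_Icc le_rfl ht.2)).intervalIntegrable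
    have hJ2 : |(∫ u in (0:ℝ)..τ, b' u (X 0 u y₀)) - ∫ u in (0:ℝ)..t, b' u (X 0 u y₀)|
        ≤ L * |τ - t| := by
      rw [intervalIntegral.integral_interval_sub_left hintτ hintt, ← Real.norm_eq_abs]
      apply intervalIntegral.norm_integral_le_of_norm_le_const
      intro u hu
      have hu' : u ∈ Set.Icc (0:ℝ) T := by
        rcases le_total t τ with h | h
        · rw [Set.uIoc_of_le h] at hu
          exact ⟨le_trans ht.1 hu.1.le, le_trans hu.2 hτIcc.2⟩
        · rw [Set.uIoc_of_ge h] at hu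
          exact ⟨le_trans hτIcc.1 hu.1.le, le_trans hu.2 ht.2⟩
      exact hb'bdd u hu' _
    rw [Real.dist_eq]
    calc |(∫ u in (0:ℝ)..τ, cq b X y₀ (Y τ x) u) - ∫ u in (0:ℝ)..t, b' u (X 0 u y₀)|
        ≤ |(∫ u in (0:ℝ)..τ, cq b X y₀ (Y τ x) u) - ∫ u in (0:ℝ)..τ, b' u (X 0 u y₀)|
          + |(∫ u in (0:ℝ)..τ, b' u (X 0 u y₀)) - ∫ u in (0:ℝ)..t, b' u (X 0 u y₀)| := by
          exact abs_sub_le _ _ _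
      _ ≤ ε/3 + L * |τ - t| := add_le_add hJ1 hJ2
      _ < ε := by
          have : L * |τ - t| ≤ ε/3 := by
            rcases eq_or_lt_of_le hL with h | h
            · rw [← h]; simpa using hε3.le
            · calc L * |τ - t| ≤ L * (ε/(3*(L+1))) :=
                  mul_le_mul_of_nonneg_left hτ2.le hL
                _ ≤ ε/3 := by
                    rw [mul_comm, div_mul_eq_mul_div,
                      div_le_div_iff₀ (by positivity) (by norm_num)]
                    nlinarith [h.le, hε.le]
          linarith
  -- combine
  rw [hsplit, Filter.tendsto_sup]
  constructor
  · by_cases hbot : 𝓝[s' ∩ S] t = ⊥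
    · rw [hbot]; exact Filter.tendsto_bot
    · haveI : (𝓝[s' ∩ S] t).NeBot := ⟨hbot⟩
      have hγs : Filter.Tendsto (slope γ t) (𝓝[s' ∩ S] t) (𝓝 g) :=
        hγslope.mono_left (nhdsWithin_mono t Set.inter_subset_left)
      have hγs0 : Filter.Tendsto (slope γ t) (𝓝[s' ∩ S] t) (𝓝 0) := by
        apply Filter.Tendsto.congr' _ tendsto_const_nhds
        filter_upwards [self_mem_nhdsWithin] with τ hτ
        rw [slope_def_field, hτ.2, hγt, sub_self, zero_div]
      have hg0 : g = 0 := tendsto_nhds_unique hγs hγs0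
      rw [hg0, neg_zero, zero_mul]
      apply Filter.Tendsto.congr' _ tendsto_const_nhds
      filter_upwards [self_mem_nhdsWithin] with τ hτ
      exact (hslope0 τ hτ).symm
  · have hlim : Filter.Tendsto
        (fun τ => ((x - γ τ)/(τ - t)) * Real.exp (-∫ u in (0:ℝ)..τ, cq b X y₀ (Y τ x) u))
        (𝓝[s' \ S] t) (𝓝 (-g * D)) :=
      (hA.mono_left (nhdsWithin_mono t Set.diff_subset)).mul hE
    apply hlim.congr'
    filter_upwards [self_mem_nhdsWithin] with τ hτ
    exact (hslopeEq τ hτ).symm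

end Main5



/-- Representation of the solution of the transport equation. For a smooth
noise path `z`, with `Y_{0,t} = (X_{0,t})⁻¹` the inverse of the forward flow, the function
`u(t,x) := u₀(Y_{0,t}(x))` is differentiable in `t` and `x` on `[0,T] × ℝ`, satisfies
`∂_t u(t,x) + (b(t,x) + z'(t)) ∂_x u(t,x) = 0`, and `u(0,x) = u₀(x)`. -/
theorem transport_equation_representation (T L : ℝ) (hT : 0 < T)
    (b b' : ℝ → ℝ → ℝ)
    (hb : ContinuousOn (fun p : ℝ × ℝ => b p.1 p.2) (Set.Icc 0 T ×ˢ Set.univ))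
    (hderiv : ∀ t ∈ Set.Icc (0 : ℝ) T, ∀ x : ℝ, HasDerivAt (fun y => b t y) (b' t x) x)
    (hb'c : ContinuousOn (fun p : ℝ × ℝ => b' p.1 p.2) (Set.Icc 0 T ×ˢ Set.univ))
    (hb'bdd : ∀ t ∈ Set.Icc (0 : ℝ) T, ∀ x : ℝ, |b' t x| ≤ L)
    (z : ℝ → ℝ) (hz : ContDiff ℝ 1 z)
    (u₀ : ℝ → ℝ) (hu₀ : ContDiff ℝ 1 u₀)
    (X : ℝ → ℝ → ℝ → ℝ)
    (hXcont : ∀ s ∈ Set.Icc (0 : ℝ) T, ∀ x : ℝ,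
      ContinuousOn (fun t => X s t x) (Set.Icc s T))
    (hXeq : ∀ s ∈ Set.Icc (0 : ℝ) T, ∀ x : ℝ, ∀ t ∈ Set.Icc s T,
      X s t x = x + (∫ u in s..t, b u (X s u x)) + z t - z s)
    (Y : ℝ → ℝ → ℝ)
    (hY : ∀ t ∈ Set.Icc (0 : ℝ) T, ∀ x : ℝ,
      X 0 t (Y t x) = x ∧ Y t (X 0 t x) = x) :
    (∀ t ∈ Set.Icc (0 : ℝ) T, ∀ x : ℝ, ∃ ut ux : ℝ,
      HasDerivWithinAt (fun τ => u₀ (Y τ x)) ut (Set.Icc 0 T) t ∧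
      HasDerivAt (fun y => u₀ (Y t y)) ux x ∧
      ut + (b t x + deriv z t) * ux = 0) ∧
    ∀ x : ℝ, u₀ (Y 0 x) = u₀ x := by
  have h0T : (0:ℝ) ∈ Set.Icc (0:ℝ) T := ⟨le_rfl, hT.le⟩
  have hu₀d : ∀ p : ℝ, HasDerivAt u₀ (deriv u₀ p) p :=
    fun p => ((hu₀.differentiable one_ne_zero) p).hasDerivAt
  constructor
  · intro t ht x
    refine ⟨deriv u₀ (Y t x) * (-(b t x + deriv z t)
        * Real.exp (-∫ u in (0:ℝ)..t, b' u (X 0 u (Y t x)))),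
      deriv u₀ (Y t x) * Real.exp (-∫ u in (0:ℝ)..t, b' u (X 0 u (Y t x))), ?_, ?_, ?_⟩
    · exact (hu₀d (Y t x)).comp_hasDerivWithinAt t
        (Ytderiv hT hb hderiv hb'c hb'bdd hz hXcont hXeq hY ht x)
    · exact (hu₀d (Y t x)).comp x (Yderiv hT hb hderiv hb'c hb'bdd hXcont hXeq hY ht x)
    · ring
  · intro x
    have hX00' : X 0 0 (Y 0 x) = x := (hY 0 h0T x).1
    rw [X00 hT hXeq (Y 0 x)] at hX00'
    rw [hX00']
end
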